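/- Let A : ℝⁿ → ℝᵐ be a linear map and μ > 0 a constant such that ‖Aᵀh‖_∞ ≥ μ‖h‖₁ for all h ∈ ℝᵐ. Then A is surjective, and for every p ∈ ℝᵐ there exists w ∈ ℝⁿ with Aw = p and ‖w‖₁ ≤ ‖p‖_∞/μ. Consequently every minimal-ℓ1-norm solution w* of Aw = p satisfies ‖w*‖₁ ≤ ‖p‖_∞/μ. -/
import Mathlib


/-- The ℓ1-norm on `ℝ^d`: `‖x‖₁ = Σᵢ |xᵢ|`. -/
noncomputable def l1Norm {d : ℕ} (x : Fin d → ℝ) : ℝ := ∑ i, |x i|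

/-- The ℓ∞-norm on `ℝ^d`: `‖x‖_∞ = maxᵢ |xᵢ|`. -/
noncomputable def linfNorm {d : ℕ} (x : Fin d → ℝ) : ℝ := ⨆ i, |x i|

/-- The transpose of a linear map `A : ℝⁿ → ℝᵐ` applied to `h ∈ ℝᵐ`:
`(Aᵀ h)ᵢ = Σⱼ Aⱼᵢ hⱼ` where `Aⱼᵢ = (A eᵢ)ⱼ`. -/
noncomputable def transposeApply {n m : ℕ} (A : (Fin n → ℝ) →ₗ[ℝ] (Fin m → ℝ))
    (h : Fin m → ℝ) : Fin n → ℝ :=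
  fun i => ∑ j, A (Pi.single i 1) j * h j

lemma l1Norm_nonneg' {d : ℕ} (x : Fin d → ℝ) : 0 ≤ l1Norm x :=
  Finset.sum_nonneg fun _ _ => abs_nonneg _

lemma abs_le_linfNorm' {d : ℕ} (x : Fin d → ℝ) (i : Fin d) : |x i| ≤ linfNorm x := by
  unfold linfNorm
  exact le_ciSup (f := fun i => |x i|) (Set.Finite.bddAbove (Set.finite_range _)) i

lemma linfNorm_nonneg' {d : ℕ} (x : Fin d → ℝ) : 0 ≤ linfNorm x :=
  Real.iSup_nonneg fun _ => abs_nonneg _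

lemma eq_sum_single' {d : ℕ} (x : Fin d → ℝ) : x = ∑ i, x i • (Pi.single i (1:ℝ) : Fin d → ℝ) := by
  conv_lhs => rw [← Finset.univ_sum_single x]
  congr 1; ext i
  rw [← Pi.single_smul, smul_eq_mul, mul_one]

lemma funct_eq' {m : ℕ} (f : (Fin m → ℝ) →ₗ[ℝ] ℝ) (x : Fin m → ℝ) :
    f x = ∑ j, x j * f (Pi.single j 1) := by
  conv_lhs => rw [eq_sum_single' x]
  rw [map_sum]
  exact Finset.sum_congr rfl fun j _ => by rw [map_smul, smul_eq_mul]

lemma adjoint_identity' {n m : ℕ} (A : (Fin n → ℝ) →ₗ[ℝ] (Fin m → ℝ))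
    (w : Fin n → ℝ) (h : Fin m → ℝ) :
    ∑ j, A w j * h j = ∑ i, w i * transposeApply A h i := by
  conv_lhs => rw [eq_sum_single' w]
  rw [map_sum]
  simp only [map_smul, Finset.sum_apply, Pi.smul_apply, smul_eq_mul, Finset.sum_mul]
  rw [Finset.sum_comm]
  refine Finset.sum_congr rfl fun i _ => ?_
  rw [transposeApply, Finset.mul_sum]
  exact Finset.sum_congr rfl fun j _ => by ring

lemma dot_le' {d : ℕ} (x y : Fin d → ℝ) : ∑ j, x j * y j ≤ l1Norm y * linfNorm x := by
  rw [l1Norm, Finset.sum_mul]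
  refine Finset.sum_le_sum fun j _ => ?_
  calc x j * y j ≤ |x j * y j| := le_abs_self _
    _ = |y j| * |x j| := by rw [abs_mul, mul_comm]
    _ ≤ |y j| * linfNorm x := by
        have := abs_le_linfNorm' x j
        have := abs_nonneg (y j)
        nlinarith

theorem key_existence {n m : ℕ} (A : (Fin n → ℝ) →ₗ[ℝ] (Fin m → ℝ)) (μ : ℝ) (hμ : 0 < μ)
    (hA : ∀ h : Fin m → ℝ, μ * l1Norm h ≤ linfNorm (transposeApply A h))
    (p : Fin m → ℝ) : ∃ w : Fin n → ℝ, A w = p ∧ l1Norm w ≤ linfNorm p / μ := by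
  set r : ℝ := linfNorm p / μ with hrdef
  have hr : 0 ≤ r := div_nonneg (linfNorm_nonneg' p) hμ.le
  set S : Set (Fin n → ℝ) := {w | l1Norm w ≤ r} with hS
  have hScl : IsClosed S := by
    have hc : Continuous fun w : Fin n → ℝ => l1Norm w := by
      unfold l1Norm
      exact continuous_finset_sum _ fun i _ => (continuous_apply i).abs
    exact isClosed_le hc continuous_const
  have hSsub : S ⊆ Metric.closedBall 0 r := by
    intro w hw
    rw [Metric.mem_closedBall, dist_zero_right, pi_norm_le_iff_of_nonneg hr]
    intro i
    calc ‖w i‖ = |w i| := rfl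
      _ ≤ l1Norm w := Finset.single_le_sum (fun j _ => abs_nonneg (w j)) (Finset.mem_univ i)
      _ ≤ r := hw
  have hScomp : IsCompact S :=
    (isCompact_closedBall (0 : Fin n → ℝ) r).of_isClosed_subset hScl hSsub
  have hSconv : Convex ℝ S := by
    intro x hx y hy a b ha hb hab
    simp only [hS, Set.mem_setOf_eq] at *
    calc l1Norm (a • x + b • y) ≤ a * l1Norm x + b * l1Norm y := by
          unfold l1Norm
          rw [Finset.mul_sum, Finset.mul_sum, ← Finset.sum_add_distrib]
          refine Finset.sum_le_sum fun i _ => ?_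
          simp only [Pi.add_apply, Pi.smul_apply, smul_eq_mul]
          calc |a * x i + b * y i| ≤ |a * x i| + |b * y i| := abs_add_le _ _
            _ = a * |x i| + b * |y i| := by
                rw [abs_mul, abs_mul, abs_of_nonneg ha, abs_of_nonneg hb]
      _ ≤ a * r + b * r := by gcongr
      _ = r := by rw [← add_mul, hab, one_mul]
  set C : Set (Fin m → ℝ) := A '' S with hC
  have hCcomp : IsCompact C := hScomp.image (LinearMap.continuous_of_finiteDimensional A)
  have hCconv : Convex ℝ C := hSconv.linear_image A
  by_contra hcon
  push_neg at hcon
  have hpC : p ∉ C := by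
    rintro ⟨w, hw, hAw⟩
    exact absurd hw (not_le.mpr (hcon w hAw))
  obtain ⟨f, u, hfu, hup⟩ := geometric_hahn_banach_closed_point hCconv hCcomp.isClosed hpC
  set h : Fin m → ℝ := fun j => f (Pi.single j 1) with hh
  have hfp : f p ≤ l1Norm h * linfNorm p := by
    have := funct_eq' (f : (Fin m → ℝ) →ₗ[ℝ] ℝ) p
    rw [show ((f : (Fin m → ℝ) →ₗ[ℝ] ℝ) p) = f p from rfl] at this
    rw [this]
    exact dot_le' p h
  set g : Fin n → ℝ := transposeApply A h with hg
  have hmax : ∃ w : Fin n → ℝ, l1Norm w ≤ r ∧ r * linfNorm g ≤ ∑ i, w i * g i := by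
    rcases isEmpty_or_nonempty (Fin n) with he | hne
    · refine ⟨0, ?_, ?_⟩
      · simpa [l1Norm] using hr
      · simp [linfNorm, Real.iSup_of_isEmpty]
    · obtain ⟨i, hi⟩ := Finite.exists_max fun i => |g i|
      have hlinf : linfNorm g = |g i| := le_antisymm (ciSup_le hi) (abs_le_linfNorm' g i)
      set c : ℝ := if 0 ≤ g i then r else -r with hc
      have habsc : |c| = r := by
        rcases le_or_gt 0 (g i) with h1 | h1
        · rw [hc, if_pos h1, abs_of_nonneg hr]
        · rw [hc, if_neg (not_le.mpr h1), abs_neg, abs_of_nonneg hr]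
      refine ⟨fun k => if k = i then c else 0, ?_, ?_⟩
      · rw [l1Norm]
        rw [Finset.sum_eq_single i (fun b _ hb => by simp [hb]) (by simp)]
        simp [habsc]
      · rw [Finset.sum_eq_single i (fun b _ hb => by simp [hb]) (by simp)]
        have hcg : c * g i = r * |g i| := by
          rcases le_or_gt 0 (g i) with h1 | h1
          · rw [hc, if_pos h1, abs_of_nonneg h1]
          · rw [hc, if_neg (not_le.mpr h1), abs_of_neg h1]; ring
        show r * linfNorm g ≤ (if i = i then c else 0) * g i
        rw [if_pos rfl, hcg, hlinf]
  obtain ⟨w, hwS, hwsum⟩ := hmax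
  have hAwC : A w ∈ C := ⟨w, hwS, rfl⟩
  have hfAw : f (A w) = ∑ i, w i * g i := by
    have := funct_eq' (f : (Fin m → ℝ) →ₗ[ℝ] ℝ) (A w)
    rw [show ((f : (Fin m → ℝ) →ₗ[ℝ] ℝ) (A w)) = f (A w) from rfl] at this
    rw [this, hg, hh]
    exact adjoint_identity' A w h
  have hrμ : r * μ = linfNorm p := div_mul_cancel₀ _ hμ.ne'
  have hchain : f p ≤ f (A w) := by
    have h1 : r * (μ * l1Norm h) ≤ r * linfNorm g := by
      have := hA h
      nlinarith
    calc f p ≤ l1Norm h * linfNorm p := hfp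
      _ = r * (μ * l1Norm h) := by rw [← hrμ]; ring
      _ ≤ r * linfNorm g := h1
      _ ≤ ∑ i, w i * g i := hwsum
      _ = f (A w) := hfAw.symm
  exact absurd hchain (not_le.mpr ((hfu _ hAwC).trans hup))

/-- if `‖Aᵀh‖_∞ ≥ μ‖h‖₁` for all `h`, then `A` is surjective, every
`p` has a solution `w` of `Aw = p` with `‖w‖₁ ≤ ‖p‖_∞/μ`, and consequently every
minimal-ℓ1-norm solution `w*` of `Aw = p` satisfies `‖w*‖₁ ≤ ‖p‖_∞/μ`. -/
theorem statement0 {n m : ℕ} (A : (Fin n → ℝ) →ₗ[ℝ] (Fin m → ℝ)) (μ : ℝ) (hμ : 0 < μ)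
    (hA : ∀ h : Fin m → ℝ, μ * l1Norm h ≤ linfNorm (transposeApply A h)) :
    Function.Surjective A ∧
    (∀ p : Fin m → ℝ, ∃ w : Fin n → ℝ, A w = p ∧ l1Norm w ≤ linfNorm p / μ) ∧
    (∀ p : Fin m → ℝ, ∀ wstar : Fin n → ℝ,
      A wstar = p → (∀ v : Fin n → ℝ, A v = p → l1Norm wstar ≤ l1Norm v) →
      l1Norm wstar ≤ linfNorm p / μ) := by
  refine ⟨?_, key_existence A μ hμ hA, ?_⟩
  · intro p
    obtain ⟨w, hw, -⟩ := key_existence A μ hμ hA p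
    exact ⟨w, hw⟩
  · intro p wstar _ hmin
    obtain ⟨w, hw1, hw2⟩ := key_existence A μ hμ hA p
    exact (hmin w hw1).trans hw2
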